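/- (Levi / monotone convergence for the pan-integral) Let (X, 𝒜, μ) be a monotone measure space with μ continuous from below, let E ∈ 𝒜, and let f_k : E → [0, ∞] be an increasing sequence of measurable functions (f_k ≤ f_{k+1} for each k) with pointwise limit f(x) = lim_{k→∞} f_k(x) for x ∈ E. Then lim_{k→∞} ∫_E^pan f_k dμ = ∫_E^pan f dμ. -/

import Mathlib

open Set Filter
open scoped ENNReal NNReal Topology

variable {X : Type*}

/-- A monotone measure: vanishes on the empty set, positive on the whole space,
and monotone on measurable sets. -/
structure MonotoneMeasure [MeasurableSpace X] (mu : Set X → ℝ≥0∞) : Prop where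
  empty : mu ∅ = 0
  univ_pos : 0 < mu Set.univ
  mono : ∀ ⦃A B : Set X⦄, MeasurableSet A → MeasurableSet B → A ⊆ B → mu A ≤ mu B

/-- A finite measurable partition of `X`. -/
def IsPanPartition [MeasurableSpace X] {n : ℕ} (A : Fin n → Set X) : Prop :=
  (∀ i, MeasurableSet (A i)) ∧ Pairwise (Function.onFun Disjoint A) ∧ (⋃ i, A i) = Set.univ

/-- The `(+,·)`-based pan-integral of a nonnegative function on `X`. -/
noncomputable def panIntegral [MeasurableSpace X] (mu : Set X → ℝ≥0∞) (f : X → ℝ≥0∞) : ℝ≥0∞ :=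
  ⨆ (n : ℕ) (A : Fin n → Set X) (_ : IsPanPartition A) (lam : Fin n → ℝ≥0)
    (_ : ∀ x, ∑ i, Set.indicator (A i) (fun _ => (lam i : ℝ≥0∞)) x ≤ f x),
    ∑ i, (lam i : ℝ≥0∞) * mu (A i)

/-- The pan-integral of `f` on a set `A`, i.e. the pan-integral of `f·χ_A` on `X`. -/
noncomputable def panIntegralOn [MeasurableSpace X] (mu : Set X → ℝ≥0∞) (f : X → ℝ≥0∞)
    (A : Set X) : ℝ≥0∞ :=
  panIntegral mu (A.indicator f)

/-- Subadditivity of a set function. -/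
def PanSubadditive [MeasurableSpace X] (mu : Set X → ℝ≥0∞) : Prop :=
  ∀ ⦃A B : Set X⦄, MeasurableSet A → MeasurableSet B → mu (A ∪ B) ≤ mu A + mu B

/-- Null-additivity of a set function. -/
def PanNullAdditive [MeasurableSpace X] (mu : Set X → ℝ≥0∞) : Prop :=
  ∀ ⦃A B : Set X⦄, MeasurableSet A → MeasurableSet B → mu B = 0 → mu (A ∪ B) = mu A

/-- Continuity from below of a set function. -/
def PanContinuousFromBelow [MeasurableSpace X] (mu : Set X → ℝ≥0∞) : Prop :=
  ∀ E : ℕ → Set X, (∀ n, MeasurableSet (E n)) → Monotone E →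
    Filter.Tendsto (fun n => mu (E n)) Filter.atTop (nhds (mu (⋃ n, E n)))

/-- A real-valued function is pan-integrable if the pan-integrals of its
positive and negative parts are both finite. -/
def PanIntegrable [MeasurableSpace X] (mu : Set X → ℝ≥0∞) (f : X → ℝ) : Prop :=
  panIntegral mu (fun x => ENNReal.ofReal (f x)) < ⊤ ∧
    panIntegral mu (fun x => ENNReal.ofReal (-f x)) < ⊤

/-- The symmetric pan-integral of a real-valued function:
`∫ f⁺ dμ − ∫ f⁻ dμ`. -/
noncomputable def panIntegralReal [MeasurableSpace X] (mu : Set X → ℝ≥0∞) (f : X → ℝ) : ℝ :=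
  (panIntegral mu (fun x => ENNReal.ofReal (f x))).toReal -
    (panIntegral mu (fun x => ENNReal.ofReal (-f x))).toReal

/-- The `‖·‖_{μ,p}` functional: `(∫_E^pan |f|^p dμ)^(1/p)`. -/
noncomputable def panNorm [MeasurableSpace X] (mu : Set X → ℝ≥0∞) (E : Set X) (p : ℝ)
    (f : X → ℝ) : ℝ≥0∞ :=
  (panIntegralOn mu (fun x => ENNReal.ofReal (|f x| ^ p)) E) ^ (1 / p)

lemma panIntegral_mono [MeasurableSpace X] (mu : Set X → ℝ≥0∞) {f g : X → ℝ≥0∞}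
    (h : ∀ x, f x ≤ g x) : panIntegral mu f ≤ panIntegral mu g := by
  refine iSup_le fun n => iSup_le fun A => iSup_le fun hA => iSup_le fun lam =>
    iSup_le fun hl => ?_
  exact le_iSup_of_le n <| le_iSup_of_le A <| le_iSup_of_le hA <| le_iSup_of_le lam <|
    le_iSup_of_le (fun x => (hl x).trans (h x)) le_rfl

theorem panIntegralOn_tendsto_of_monotone [MeasurableSpace X]
    (mu : Set X → ℝ≥0∞) (hmu : MonotoneMeasure mu) (hcb : PanContinuousFromBelow mu)
    {E : Set X} (hE : MeasurableSet E)
    (f : ℕ → X → ℝ≥0∞) (hf : ∀ k, Measurable (f k))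
    (hmono : ∀ k, ∀ x ∈ E, f k x ≤ f (k + 1) x)
    (g : X → ℝ≥0∞) (hg : Measurable g)
    (hlim : ∀ x ∈ E, Filter.Tendsto (fun k => f k x) Filter.atTop (nhds (g x))) :
    Filter.Tendsto (fun k => panIntegralOn mu (f k) E) Filter.atTop
      (nhds (panIntegralOn mu g E)) := by
  -- pointwise monotonicity of the indicator sequence
  have hEmono : ∀ x, Monotone fun k => E.indicator (f k) x := by
    intro x
    refine monotone_nat_of_le_succ fun k => ?_
    by_cases hx : x ∈ E
    · simpa [Set.indicator_of_mem hx] using hmono k x hx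
    · simp [Set.indicator_of_notMem hx]
  have hfg : ∀ k x, E.indicator (f k) x ≤ E.indicator g x := by
    intro k x
    by_cases hx : x ∈ E
    · have hm : Monotone fun k => f k x := monotone_nat_of_le_succ fun k => hmono k x hx
      simpa [Set.indicator_of_mem hx] using hm.ge_of_tendsto (hlim x hx) k
    · simp [Set.indicator_of_notMem hx]
  have hseq : Monotone fun k => panIntegralOn mu (f k) E :=
    monotone_nat_of_le_succ fun k => panIntegral_mono mu (hEmono · k.le_succ)
  have key : panIntegralOn mu g E = ⨆ k, panIntegralOn mu (f k) E := by
    refine le_antisymm ?_ (iSup_le fun k => panIntegral_mono mu (hfg k))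
    set S := ⨆ k, panIntegralOn mu (f k) E with hS
    refine iSup_le fun n => iSup_le fun A => iSup_le fun hA => iSup_le fun lam =>
      iSup_le fun hlam => ?_
    refine ENNReal.le_of_forall_lt_one_mul_le fun a ha => ?_
    set c : ℝ≥0 := a.toNNReal with hcdef
    have hac : (c : ℝ≥0∞) = a := ENNReal.coe_toNNReal (ha.trans ENNReal.one_lt_top).ne
    set s : X → ℝ≥0∞ := fun x => ∑ i, (A i).indicator (fun _ => (lam i : ℝ≥0∞)) x with hsdef
    have hsmeas : Measurable s :=
      Finset.measurable_sum _ fun i _ => measurable_const.indicator (hA.1 i)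
    set B : ℕ → Set X := fun k => {x | (c : ℝ≥0∞) * s x ≤ E.indicator (f k) x} with hBdef
    have hBmeas : ∀ k, MeasurableSet (B k) :=
      fun k => measurableSet_le (measurable_const.mul hsmeas) ((hf k).indicator hE)
    have hBmono : Monotone B := by
      intro k l hkl x hx
      exact le_trans hx (hEmono x hkl)
    have hBunion : (⋃ k, B k) = Set.univ := by
      refine Set.eq_univ_of_forall fun x => Set.mem_iUnion.2 ?_
      rcases eq_or_ne (s x) 0 with h0 | h0
      · exact ⟨0, by simp [hBdef, h0]⟩
      · have hsle : s x ≤ E.indicator g x := hlam x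
        have hxE : x ∈ E := by
          by_contra hx
          exact h0 (le_antisymm (by simpa [Set.indicator_of_notMem hx] using hsle) zero_le)
        have hstop : s x ≠ ⊤ := by
          refine ne_top_of_le_ne_top ?_ (Finset.sum_le_sum fun i _ =>
            Set.indicator_le_self' (fun _ _ => zero_le) x)
          exact (ENNReal.sum_lt_top.2 fun i _ => ENNReal.coe_lt_top).ne
        have hcs : (c : ℝ≥0∞) * s x < g x := by
          calc (c : ℝ≥0∞) * s x < 1 * s x := by
                exact ENNReal.mul_lt_mul_left h0 hstop (hac ▸ ha)
          _ = s x := one_mul _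
          _ ≤ g x := by simpa [Set.indicator_of_mem hxE] using hsle
        obtain ⟨k, hk⟩ := ((hlim x hxE).eventually (eventually_gt_nhds hcs)).exists
        exact ⟨k, by simpa [hBdef, Set.indicator_of_mem hxE] using hk.le⟩
    -- each truncated sum is below S
    have hstep : ∀ k, ∑ i, ((c * lam i : ℝ≥0) : ℝ≥0∞) * mu (A i ∩ B k) ≤ S := by
      intro k
      set A' : Fin (n + 1) → Set X := Fin.cons (B k)ᶜ (fun i => A i ∩ B k) with hA'def
      set lam' : Fin (n + 1) → ℝ≥0 := Fin.cons 0 (fun i => c * lam i) with hlam'def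
      have hpart' : IsPanPartition A' := by
        refine ⟨?_, ?_, ?_⟩
        · intro j
          rcases Fin.eq_zero_or_eq_succ j with rfl | ⟨i, rfl⟩
          · simpa [hA'def] using (hBmeas k).compl
          · simpa [hA'def] using (hA.1 i).inter (hBmeas k)
        · intro j j' hjj'
          rcases Fin.eq_zero_or_eq_succ j with rfl | ⟨i, rfl⟩ <;>
            rcases Fin.eq_zero_or_eq_succ j' with rfl | ⟨i', rfl⟩
          · exact absurd rfl hjj'
          · simpa [Function.onFun, hA'def] using
              (disjoint_compl_left.mono_right Set.inter_subset_right)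
          · simpa [Function.onFun, hA'def] using
              (disjoint_compl_left.mono_right Set.inter_subset_right).symm
          · have hii : i ≠ i' := fun h => hjj' (by rw [h])
            simpa [Function.onFun, hA'def] using
              (hA.2.1 hii).mono Set.inter_subset_left Set.inter_subset_left
        · refine Set.eq_univ_of_forall fun x => Set.mem_iUnion.2 ?_
          by_cases hx : x ∈ B k
          · have : x ∈ ⋃ i, A i := hA.2.2 ▸ Set.mem_univ x
            obtain ⟨i, hi⟩ := Set.mem_iUnion.1 this
            exact ⟨i.succ, by simp [hA'def, hi, hx]⟩
          · exact ⟨0, by simp [hA'def, hx]⟩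
      have hbound : ∀ x, ∑ j, (A' j).indicator (fun _ => (lam' j : ℝ≥0∞)) x
          ≤ E.indicator (f k) x := by
        intro x
        rw [Fin.sum_univ_succ]
        by_cases hx : x ∈ B k
        · have heach : ∀ i : Fin n,
              (A' i.succ).indicator (fun _ => (lam' i.succ : ℝ≥0∞)) x
                = (c : ℝ≥0∞) * (A i).indicator (fun _ => (lam i : ℝ≥0∞)) x := by
            intro i
            by_cases hxa : x ∈ A i
            · simp [hA'def, hlam'def, Set.indicator_of_mem, hxa, hx,
                Set.mem_inter_iff, ENNReal.coe_mul]
            · simp [hA'def, hlam'def, Set.indicator_of_notMem, hxa,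
                Set.mem_inter_iff]
          have h0 : (A' 0).indicator (fun _ => (lam' 0 : ℝ≥0∞)) x = 0 := by
            simp [hA'def, hlam'def]
          rw [h0, zero_add]
          calc ∑ i : Fin n, (A' i.succ).indicator (fun _ => (lam' i.succ : ℝ≥0∞)) x
              = (c : ℝ≥0∞) * s x := by
                rw [hsdef, Finset.mul_sum]; exact Finset.sum_congr rfl fun i _ => heach i
          _ ≤ E.indicator (f k) x := hx
        · have heach : ∀ i : Fin n,
              (A' i.succ).indicator (fun _ => (lam' i.succ : ℝ≥0∞)) x = 0 := by
            intro i
            simp [hA'def, Set.indicator_of_notMem, Set.mem_inter_iff, hx]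
          have h0 : (A' 0).indicator (fun _ => (lam' 0 : ℝ≥0∞)) x = 0 := by
            simp [hA'def, hlam'def]
          simp [h0, heach]
      have hval : ∑ i, ((c * lam i : ℝ≥0) : ℝ≥0∞) * mu (A i ∩ B k)
          = ∑ j, (lam' j : ℝ≥0∞) * mu (A' j) := by
        rw [Fin.sum_univ_succ]
        simp [hA'def, hlam'def]
      rw [hval]
      refine le_trans ?_ (le_iSup _ k)
      exact le_iSup_of_le (n + 1) <| le_iSup_of_le A' <| le_iSup_of_le hpart' <|
        le_iSup_of_le lam' <| le_iSup_of_le hbound le_rfl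
    -- take the limit in k using continuity from below
    have htend : ∀ i : Fin n,
        Filter.Tendsto (fun k => mu (A i ∩ B k)) Filter.atTop (nhds (mu (A i))) := by
      intro i
      have := hcb (fun k => A i ∩ B k) (fun k => (hA.1 i).inter (hBmeas k))
        (fun k l hkl => Set.inter_subset_inter_right _ (hBmono hkl))
      rwa [← Set.inter_iUnion, hBunion, Set.inter_univ] at this
    have htends : Filter.Tendsto (fun k => ∑ i, ((c * lam i : ℝ≥0) : ℝ≥0∞) * mu (A i ∩ B k))
        Filter.atTop (nhds (∑ i, ((c * lam i : ℝ≥0) : ℝ≥0∞) * mu (A i))) := by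
      refine tendsto_finset_sum _ fun i _ => ?_
      exact ENNReal.Tendsto.const_mul (htend i) (Or.inr ENNReal.coe_ne_top)
    have hfinal : ∑ i, ((c * lam i : ℝ≥0) : ℝ≥0∞) * mu (A i) ≤ S :=
      le_of_tendsto htends (Filter.Eventually.of_forall hstep)
    calc a * ∑ i, (lam i : ℝ≥0∞) * mu (A i)
        = ∑ i, ((c * lam i : ℝ≥0) : ℝ≥0∞) * mu (A i) := by
          rw [← hac, Finset.mul_sum]
          exact Finset.sum_congr rfl fun i _ => by
            rw [ENNReal.coe_mul, mul_assoc]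
    _ ≤ S := hfinal
  rw [key]
  exact tendsto_atTop_iSup hseq
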